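/- (Proposition 1, CDF correction.) Let ω : ℝ → (0, ∞) be differentiable and define P(κ) = exp κ · Φ(z₊(κ)) − Φ(z₋(κ)) with z_±(κ) = (κ ± ω(κ)²/2)/ω(κ). Then P is differentiable on ℝ and exp(−κ) P'(κ) = Φ(z₊(κ)) + φ(z₊(κ)) · ω'(κ); i.e., the implied cumulative distribution function equals the Black–Scholes quasi-CDF Ψ_BS^ω(κ) = Φ(z₊(κ)) plus the correction addend ζ^ω(κ) = ψ_BS^ω(κ) ω(κ) ∂_κ ω(κ) = φ(z₊(κ)) ω'(κ). -/

import Mathlib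

open MeasureTheory Real

/-- Standard normal probability density function. -/
noncomputable def stdNormalPDF (z : ℝ) : ℝ := Real.exp (-z ^ 2 / 2) / Real.sqrt (2 * Real.pi)

/-- Standard normal cumulative distribution function. -/
noncomputable def stdNormalCDF (z : ℝ) : ℝ := ∫ u in Set.Iic z, stdNormalPDF u

lemma continuous_stdNormalPDF : Continuous stdNormalPDF := by
  unfold stdNormalPDF
  fun_prop

lemma integrable_stdNormalPDF : Integrable stdNormalPDF := by
  have h : Integrable (fun x : ℝ => Real.exp (-(1/2 : ℝ) * x ^ 2)) :=
    integrable_exp_neg_mul_sq (by norm_num)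
  have := h.div_const (Real.sqrt (2 * Real.pi))
  refine this.congr ?_
  filter_upwards with x
  unfold stdNormalPDF
  congr 1
  ring_nf

lemma hasDerivAt_stdNormalCDF (z : ℝ) :
    HasDerivAt stdNormalCDF (stdNormalPDF z) z := by
  have hfun : stdNormalCDF = fun x => stdNormalCDF 0 + ∫ u in (0:ℝ)..x, stdNormalPDF u := by
    funext y
    have := intervalIntegral.integral_Iic_sub_Iic
      (μ := volume) (f := stdNormalPDF) (a := (0:ℝ)) (b := y)
      integrable_stdNormalPDF.integrableOn integrable_stdNormalPDF.integrableOn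
    unfold stdNormalCDF
    linarith [this]
  rw [hfun]
  have h := intervalIntegral.integral_hasDerivAt_right
    (f := stdNormalPDF) (a := (0:ℝ)) (b := z)
    (integrable_stdNormalPDF.intervalIntegrable)
    (continuous_stdNormalPDF.stronglyMeasurableAtFilter _ _)
    (continuous_stdNormalPDF.continuousAt)
  simpa using h

theorem implied_cdf_correction (ω ω' : ℝ → ℝ)
    (hpos : ∀ κ, 0 < ω κ)
    (hderiv : ∀ κ, HasDerivAt ω (ω' κ) κ)
    (P : ℝ → ℝ)
    (hP : P = fun κ => Real.exp κ * stdNormalCDF ((κ + ω κ ^ 2 / 2) / ω κ)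
      - stdNormalCDF ((κ - ω κ ^ 2 / 2) / ω κ)) :
    ∀ κ, DifferentiableAt ℝ P κ ∧
      Real.exp (-κ) * deriv P κ
        = stdNormalCDF ((κ + ω κ ^ 2 / 2) / ω κ)
          + stdNormalPDF ((κ + ω κ ^ 2 / 2) / ω κ) * ω' κ := by
  intro κ
  have hw : ω κ ≠ 0 := (hpos κ).ne'
  set w := ω κ with hwdef
  set w' := ω' κ with hwdef'
  -- derivatives of the numerators
  have hsq : HasDerivAt (fun x => ω x ^ 2 / 2) (w * w') κ := by
    have this : HasDerivAt (fun x => ω x ^ 2 / 2) (((2:ℕ):ℝ) * ω κ ^ (2 - 1) * ω' κ / 2) κ :=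
      ((hderiv κ).fun_pow 2).div_const 2
    convert this using 1
    ring
  have hnump : HasDerivAt (fun x => x + ω x ^ 2 / 2) (1 + w * w') κ :=
    (hasDerivAt_id κ).add hsq
  have hnumm : HasDerivAt (fun x => x - ω x ^ 2 / 2) (1 - w * w') κ :=
    (hasDerivAt_id κ).sub hsq
  set dp := ((1 + w * w') * w - (κ + w ^ 2 / 2) * w') / w ^ 2 with hdp
  set dm := ((1 - w * w') * w - (κ - w ^ 2 / 2) * w') / w ^ 2 with hdm
  have hzp : HasDerivAt (fun x => (x + ω x ^ 2 / 2) / ω x) dp κ :=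
    hnump.div (hderiv κ) hw
  have hzm : HasDerivAt (fun x => (x - ω x ^ 2 / 2) / ω x) dm κ :=
    hnumm.div (hderiv κ) hw
  set zp := (κ + w ^ 2 / 2) / w with hzpe
  set zm := (κ - w ^ 2 / 2) / w with hzme
  have hCp : HasDerivAt (fun x => stdNormalCDF ((x + ω x ^ 2 / 2) / ω x))
      (stdNormalPDF zp * dp) κ := (hasDerivAt_stdNormalCDF zp).comp (h₂ := stdNormalCDF) κ hzp
  have hCm : HasDerivAt (fun x => stdNormalCDF ((x - ω x ^ 2 / 2) / ω x))
      (stdNormalPDF zm * dm) κ := (hasDerivAt_stdNormalCDF zm).comp (h₂ := stdNormalCDF) κ hzm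
  have hPd : HasDerivAt P
      (Real.exp κ * stdNormalCDF zp + Real.exp κ * (stdNormalPDF zp * dp)
        - stdNormalPDF zm * dm) κ := by
    rw [hP]
    exact ((Real.hasDerivAt_exp κ).mul hCp).sub hCm
  refine ⟨hPd.differentiableAt, ?_⟩
  rw [hPd.deriv]
  -- key identity: φ(zm) = exp κ * φ(zp)
  have hsqdiff : zp ^ 2 - zm ^ 2 = 2 * κ := by
    rw [hzpe, hzme]
    field_simp
    ring
  have harg : -zm ^ 2 / 2 = κ + -zp ^ 2 / 2 := by linarith
  have hφ : stdNormalPDF zm = Real.exp κ * stdNormalPDF zp := by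
    unfold stdNormalPDF
    rw [harg, Real.exp_add]
    ring
  -- dp - dm = w'
  have hd : dp - dm = w' := by
    rw [hdp, hdm]
    field_simp
    ring
  rw [hφ, Real.exp_neg]
  have hexp : Real.exp κ ≠ 0 := Real.exp_ne_zero κ
  field_simp
  rw [← hd]
  ring
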